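/- Let 0 < η < π/3 with 2|a|⁴ < 1, where a = e^{-iη}/(2cos η), c = 1/(1-|a|⁴), z_k = ca^{k+1}. Then for every integer j ≥ 1: (i) |z_k| ≤ |z_j| for all k ≥ j, so {z_k : k ≥ j} ⊆ closed disk D(0,|z_j|); and (ii) every point on the broken segment z₀z₁⋯z_{j-1} (the union of segments [z_{k-1}, z_k] for 1 ≤ k ≤ j-1, interpreted as the union of segments between consecutive points z₀,…,z_{j-1}) has modulus strictly greater than |z_j|. In particular, |(1-t)·1 + t·a| > |a|² for all t ∈ [0,1]. -/

import Mathlib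

open Real Set

theorem stmt17 (η : ℝ) (hη0 : 0 < η) (hη1 : η < π / 3)
    (a : ℂ) (ha : a = Complex.exp (-(η : ℂ) * Complex.I) / (2 * Real.cos η))
    (h4 : 2 * ‖a‖ ^ 4 < 1)
    (c : ℝ) (hc : c = 1 / (1 - ‖a‖ ^ 4))
    (z : ℕ → ℂ) (hz : ∀ k, z k = (c : ℂ) * a ^ (k + 1)) :
    (∀ j k : ℕ, 1 ≤ j → j ≤ k → ‖z k‖ ≤ ‖z j‖) ∧
    (∀ j k : ℕ, 1 ≤ j → 1 ≤ k → k + 1 ≤ j →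
      ∀ p ∈ segment ℝ (z (k - 1)) (z k), ‖z j‖ < ‖p‖) ∧
    (∀ t : ℝ, t ∈ Set.Icc (0 : ℝ) 1 →
      ‖a‖ ^ 2 < ‖(1 - (t : ℂ)) * 1 + (t : ℂ) * a‖) := by
  have hcos : 0 < Real.cos η := by
    apply Real.cos_pos_of_mem_Ioo
    constructor <;> [linarith [pi_pos]; linarith [pi_pos]]
  have h2 : ((2:ℂ) * (Real.cos η : ℂ)) = (((2 * Real.cos η : ℝ)) : ℂ) := by push_cast; ring
  have hA : ‖a‖ = 1 / (2 * Real.cos η) := by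
    rw [ha, norm_div, Complex.norm_exp]
    have h0 : (-(η:ℂ) * Complex.I).re = 0 := by simp
    rw [h0, Real.exp_zero, h2, Complex.norm_of_nonneg (by positivity)]
  have hre : a.re = 1/2 := by
    rw [ha]
    have h1 : -(η:ℂ) * Complex.I = ((-η : ℝ) : ℂ) * Complex.I := by push_cast; ring
    rw [h1, h2, Complex.div_ofReal_re, Complex.exp_ofReal_mul_I_re, Real.cos_neg]
    field_simp
  set A := ‖a‖ with hAdef
  have hApos : 0 < A := by rw [hA]; positivity
  have hA1 : A < 1 := by nlinarith [sq_nonneg (A - 1), sq_nonneg (A + 1), sq_nonneg (A^2 - 1), sq_nonneg (A^2 + 1)]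
  have hA41 : A ^ 4 < 1 := by nlinarith
  have hcpos : 0 < c := by rw [hc]; apply div_pos one_pos; linarith
  -- modulus squared identity for points on the base segment
  have haim : A ^ 2 = 1/4 + a.im ^ 2 := by
    rw [hAdef, Complex.sq_norm, Complex.normSq_apply, hre]; ring
  have key : ∀ t : ℝ, 0 ≤ t → t ≤ 1 →
      A ^ 2 < ‖(1 - (t : ℂ)) + (t : ℂ) * a‖ := by
    intro t ht0 ht1
    have hw2 : ‖(1 - (t : ℂ)) + (t : ℂ) * a‖ ^ 2 = 1 - t + A ^ 2 * t ^ 2 := by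
      rw [Complex.sq_norm, Complex.normSq_apply]
      simp [Complex.add_re, Complex.add_im, Complex.sub_re, Complex.sub_im,
        Complex.mul_re, Complex.mul_im, Complex.ofReal_re, Complex.ofReal_im, hre, haim]
      ring
    have h4' : A ^ 4 < ‖(1 - (t : ℂ)) + (t : ℂ) * a‖ ^ 2 := by
      rw [hw2]
      nlinarith [sq_nonneg (2 * A^2 * t - 1), sq_nonneg (A^2 - 1), mul_nonneg (sub_nonneg.2 ht1) (sub_nonneg.2 hA1.le), mul_nonneg (mul_nonneg (sub_nonneg.2 ht1) (sub_nonneg.2 ht1)) (pow_pos hApos 2).le, mul_nonneg ht0 (sub_nonneg.2 ht1), sq_nonneg (A^2*t - 1), mul_pos (pow_pos hApos 2) (pow_pos hApos 2)]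
    have : (A ^ 2) ^ 2 < ‖(1 - (t : ℂ)) + (t : ℂ) * a‖ ^ 2 := by
      calc (A^2)^2 = A^4 := by ring
      _ < _ := h4'
    exact lt_of_pow_lt_pow_left₀ 2 (norm_nonneg _) this
  refine ⟨?_, ?_, ?_⟩
  · intro j k hj hjk
    rw [hz, hz, norm_mul, norm_mul, norm_pow, norm_pow, Complex.norm_of_nonneg hcpos.le]
    exact mul_le_mul_of_nonneg_left (pow_le_pow_of_le_one hApos.le hA1.le (by omega)) hcpos.le
  · intro j k hj hk hkj p hp
    rw [segment_eq_image] at hp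
    obtain ⟨t, ⟨ht0, ht1⟩, rfl⟩ := hp
    have hzk1 : z (k - 1) = (c : ℂ) * a ^ k := by rw [hz]; congr 2; omega
    have hform : (1 - t) • z (k - 1) + t • z k
        = (c : ℂ) * a ^ k * ((1 - (t : ℂ)) + (t : ℂ) * a) := by
      rw [hzk1, hz, Complex.real_smul, Complex.real_smul]
      push_cast
      ring
    show ‖z j‖ < ‖(1 - t) • z (k - 1) + t • z k‖
    rw [hform, hz]
    rw [norm_mul, norm_mul, norm_mul, norm_pow, norm_pow, Complex.norm_of_nonneg hcpos.le]
    have h1 : A ^ (j + 1) ≤ A ^ (k + 2) :=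
      pow_le_pow_of_le_one hApos.le hA1.le (by omega)
    have h2' : A ^ (k + 2) < A ^ k * ‖(1 - (t : ℂ)) + (t : ℂ) * a‖ := by
      have := key t ht0 ht1
      calc A ^ (k + 2) = A ^ k * A ^ 2 := by ring
      _ < A ^ k * ‖(1 - (t : ℂ)) + (t : ℂ) * a‖ :=
        (mul_lt_mul_iff_right₀ (pow_pos hApos k)).2 this
    calc c * A ^ (j + 1) ≤ c * A ^ (k + 2) := by
          exact mul_le_mul_of_nonneg_left h1 hcpos.le
    _ < c * (A ^ k * ‖(1 - (t : ℂ)) + (t : ℂ) * a‖) :=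
          (mul_lt_mul_iff_right₀ hcpos).2 h2'
    _ = c * ‖a‖ ^ k * ‖(1 - (t : ℂ)) + (t : ℂ) * a‖ := by
          rw [← hAdef]; ring
  · intro t ⟨ht0, ht1⟩
    have := key t ht0 ht1
    simpa using this
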